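/- Let N > 2 be a real number and c > 0, and define F(v) = (v²−1)/N + 2c·v^{2−N} for v > 0. For v large enough that F(v) > 0, define G(v) = F′(v)/(2√(F(v))) + (N−1)·√(F(v))/v. Then the limit as v → ∞ of (√N − G(v))·v² equals (N−2)/(2√N). -/

import Mathlib

open Real Filter Set Topology

set_option maxHeartbeats 1000000 in
theorem stmt_13 (N c : ℝ) (hN : 2 < N) (hc : 0 < c)
    (F : ℝ → ℝ) (hF : ∀ v, F v = (v ^ 2 - 1) / N + 2 * c * v ^ (2 - N))
    (G : ℝ → ℝ)
    (hG : ∀ v, G v = deriv F v / (2 * Real.sqrt (F v)) + (N - 1) * Real.sqrt (F v) / v) :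
    Filter.Tendsto (fun v => (Real.sqrt N - G v) * v ^ 2) Filter.atTop
      (𝓝 ((N - 2) / (2 * Real.sqrt N))) := by
  have hN0 : (0:ℝ) < N := by linarith
  obtain ⟨n, hn0, hn2⟩ : ∃ n : ℝ, 0 < n ∧ n ^ 2 = N :=
    ⟨Real.sqrt N, Real.sqrt_pos.mpr hN0, Real.sq_sqrt hN0.le⟩
  subst hn2
  simp only [Real.sqrt_sq hn0.le]
  have hFe : F = fun x : ℝ => (x ^ 2 - 1) / n ^ 2 + 2 * c * x ^ (2 - n ^ 2) := funext hF
  have hnn : (n:ℝ) ^ 2 ≠ 0 := by positivity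
  set Q : ℝ → ℝ := fun v => v ^ (2 - n ^ 2) with hQ
  set T : ℝ → ℝ := fun v => Real.sqrt (v ^ 2 - 1 + 2 * c * n ^ 2 * Q v) with hT
  set h : ℝ → ℝ := fun v =>
      n * (v / T v) / 2 *
        (2 * (v / (T v + v)) * (2 * c * n ^ 2 * Q v - 1)
          + (2 * (n ^ 2 - 1) - n ^ 2 * (2 * c * n ^ 2 * Q v)) / n ^ 2) with hh
  -- basic limits
  have hQ0 : Tendsto Q atTop (𝓝 0) := by
    have := tendsto_rpow_neg_atTop (y := n ^ 2 - 2) (by linarith)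
    simpa [hQ, neg_sub] using this
  have hinv : Tendsto (fun v : ℝ => (v ^ 2)⁻¹) atTop (𝓝 0) :=
    (tendsto_pow_atTop two_ne_zero).inv_tendsto_atTop
  have hTdiv : Tendsto (fun v => T v / v) atTop (𝓝 1) := by
    have hinner : Tendsto (fun v : ℝ => 1 - (v ^ 2)⁻¹ + 2 * c * n ^ 2 * Q v * (v ^ 2)⁻¹)
        atTop (𝓝 1) := by
      have h0 : Tendsto (fun _ : ℝ => (1:ℝ)) atTop (𝓝 1) := tendsto_const_nhds
      have := (h0.sub hinv).add ((hQ0.const_mul (2 * c * n ^ 2)).mul hinv)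
      simpa using this
    have hs : Tendsto (fun v : ℝ => Real.sqrt (1 - (v ^ 2)⁻¹ + 2 * c * n ^ 2 * Q v * (v ^ 2)⁻¹))
        atTop (𝓝 1) := by
      have := (Real.continuous_sqrt.tendsto 1).comp hinner
      simpa [Function.comp_def] using this
    refine hs.congr' ?_
    filter_upwards [eventually_ge_atTop 2] with v hv
    have hv0 : (0:ℝ) < v := by linarith
    have hQv : 0 < Q v := Real.rpow_pos_of_pos hv0 _
    have hpos : (0:ℝ) < 2 * c * n ^ 2 * Q v :=
      mul_pos (mul_pos (mul_pos two_pos hc) (pow_pos hn0 2)) hQv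
    have hin : (0:ℝ) ≤ v ^ 2 - 1 + 2 * c * n ^ 2 * Q v := by nlinarith [hpos, hv]
    have heq : 1 - (v ^ 2)⁻¹ + 2 * c * n ^ 2 * Q v * (v ^ 2)⁻¹
        = (v ^ 2 - 1 + 2 * c * n ^ 2 * Q v) / v ^ 2 := by
      have hvv : (v ^ 2)⁻¹ * v ^ 2 = 1 := inv_mul_cancel₀ (by positivity)
      rw [eq_div_iff (by positivity : (v:ℝ) ^ 2 ≠ 0)]
      linear_combination (2 * c * n ^ 2 * Q v - 1) * hvv
    rw [heq, Real.sqrt_div hin, Real.sqrt_sq hv0.le]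
  have hvT : Tendsto (fun v => v / T v) atTop (𝓝 1) := by
    have := hTdiv.inv₀ one_ne_zero
    simpa [inv_div] using this
  have hmid : Tendsto (fun v => v / (T v + v)) atTop (𝓝 (2:ℝ)⁻¹) := by
    have h2 : Tendsto (fun v => T v / v + 1) atTop (𝓝 2) := by
      have := hTdiv.add_const 1
      norm_num at this; exact this
    have := h2.inv₀ two_ne_zero
    refine this.congr' ?_
    filter_upwards [eventually_gt_atTop 0] with v hv0
    rw [show T v / v + 1 = (T v + v) / v by field_simp, inv_div]
  have hlim : Tendsto h atTop (𝓝 ((n ^ 2 - 2) / (2 * n))) := by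
    have A : Tendsto (fun v => n * (v / T v) / 2) atTop (𝓝 (n * 1 / 2)) :=
      (hvT.const_mul n).div_const 2
    have B : Tendsto (fun v => 2 * (v / (T v + v)) * (2 * c * n ^ 2 * Q v - 1)) atTop
        (𝓝 (2 * (2:ℝ)⁻¹ * (2 * c * n ^ 2 * 0 - 1))) :=
      (hmid.const_mul 2).mul ((hQ0.const_mul (2 * c * n ^ 2)).sub_const 1)
    have C : Tendsto (fun v => (2 * (n ^ 2 - 1) - n ^ 2 * (2 * c * n ^ 2 * Q v)) / n ^ 2) atTop
        (𝓝 ((2 * (n ^ 2 - 1) - n ^ 2 * (2 * c * n ^ 2 * 0)) / n ^ 2)) :=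
      ((tendsto_const_nhds (x := 2 * (n ^ 2 - 1))).sub
        ((hQ0.const_mul (2 * c * n ^ 2)).const_mul (n ^ 2))).div_const (n ^ 2)
    have := A.mul (B.add C)
    rw [hh]
    convert this using 2
    field_simp
    ring
  refine Tendsto.congr' ?_ hlim
  filter_upwards [eventually_ge_atTop 2] with v hv
  have hv0 : (0:ℝ) < v := by linarith
  have hQv : 0 < Q v := Real.rpow_pos_of_pos hv0 _
  have hpos : (0:ℝ) < 2 * c * n ^ 2 * Q v :=
    mul_pos (mul_pos (mul_pos two_pos hc) (pow_pos hn0 2)) hQv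
  have hin : (0:ℝ) < v ^ 2 - 1 + 2 * c * n ^ 2 * Q v := by nlinarith [hpos, hv]
  have hTv : 0 < T v := Real.sqrt_pos.mpr hin
  have hT2 : T v ^ 2 = v ^ 2 - 1 + 2 * c * n ^ 2 * Q v := Real.sq_sqrt hin.le
  have hne1 : n ≠ 0 := hn0.ne'
  have hne2 : v ≠ 0 := hv0.ne'
  have hne3 : T v ≠ 0 := hTv.ne'
  have hne4 : T v + v ≠ 0 := ne_of_gt (by linarith)
  have hsq : Real.sqrt (F v) = T v / n := by
    have hFv : F v = (v ^ 2 - 1 + 2 * c * n ^ 2 * Q v) / n ^ 2 := by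
      rw [hF v, hQ]; field_simp
    rw [hFv, Real.sqrt_div hin.le, Real.sqrt_sq hn0.le, hT]
  have hDe : deriv F v = 2 * v / n ^ 2 + 2 * c * ((2 - n ^ 2) * (Q v / v)) := by
    have h1 : HasDerivAt (fun x : ℝ => (x ^ 2 - 1) / n ^ 2) (2 * v / n ^ 2) v := by
      simpa using ((hasDerivAt_pow 2 v).sub_const 1).div_const (n ^ 2)
    have h2 : HasDerivAt (fun x : ℝ => 2 * c * x ^ (2 - n ^ 2))
        (2 * c * ((2 - n ^ 2) * v ^ (2 - n ^ 2 - 1))) v :=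
      (Real.hasDerivAt_rpow_const (Or.inl hv0.ne')).const_mul (2 * c)
    rw [hFe, HasDerivAt.deriv (f := fun x : ℝ => (x ^ 2 - 1) / n ^ 2 + 2 * c * x ^ (2 - n ^ 2)) (h1.add h2), Real.rpow_sub hv0, Real.rpow_one, hQ]
  have hsv : T v - v = (2 * c * n ^ 2 * Q v - 1) / (T v + v) := by
    rw [eq_div_iff hne4]
    linear_combination hT2
  have e2 : 2 * n ^ 2 * T v * v - (2 * v ^ 2 + 2 * c * n ^ 2 * (2 - n ^ 2) * Q v)
      - 2 * (n ^ 2 - 1) * T v ^ 2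
      = 2 * n ^ 2 * v * (T v - v) + (2 * (n ^ 2 - 1) - 2 * c * n ^ 4 * Q v) := by
    linear_combination (-2 * (n ^ 2 - 1)) * hT2
  calc h v
      = v * (2 * n ^ 2 * v * ((2 * c * n ^ 2 * Q v - 1) / (T v + v))
          + (2 * (n ^ 2 - 1) - 2 * c * n ^ 4 * Q v)) / (2 * n * T v) := by
        rw [hh]; field_simp
    _ = v * (2 * n ^ 2 * v * (T v - v) + (2 * (n ^ 2 - 1) - 2 * c * n ^ 4 * Q v))
          / (2 * n * T v) := by rw [hsv]
    _ = v * (2 * n ^ 2 * T v * v - (2 * v ^ 2 + 2 * c * n ^ 2 * (2 - n ^ 2) * Q v)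
          - 2 * (n ^ 2 - 1) * T v ^ 2) / (2 * n * T v) := by rw [e2]
    _ = (n - G v) * v ^ 2 := by
        rw [hG v, hDe, hsq]
        field_simp
        ring
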